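/- arXiv:2409.17787 — 3 statements merged into one kernel-verified Lean document; each statement's English description precedes it below -/
import Mathlib

section
/- Let α > 0 and let h : ℝ² → ℝ satisfy h(x) = -α log|x| + O(|x|⁻¹) as |x| → ∞. For a polynomial v of degree m in the variable x₁ - i x₂, the function u(x) = e^{h(x)} v(x₁ - i x₂) satisfies |u(x)| ≍ |x|^{m - α} as |x| → ∞. Consequently u ∈ L²(ℝ²) if and only if m < α - 1, and u is bounded if and only if m ≤ α. -/
open MeasureTheory
open scoped ENNReal NNReal


private lemma poly_two_sided (v : Polynomial ℂ) (hm : v.Monic) :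
    ∃ B : ℝ, 0 ≤ B ∧ ∀ y : ℂ, 1 ≤ ‖y‖ → 2 * B ≤ ‖y‖ →
      ‖y‖ ^ v.natDegree / 2 ≤ ‖v.eval y‖ ∧ ‖v.eval y‖ ≤ (3 / 2) * ‖y‖ ^ v.natDegree := by
  set m := v.natDegree with hm'
  refine ⟨∑ i ∈ Finset.range m, ‖v.coeff i‖,
    Finset.sum_nonneg fun i _ => norm_nonneg _, fun y h1 h2 => ?_⟩
  have hy0 : (0:ℝ) < ‖y‖ := lt_of_lt_of_le one_pos h1
  have key : ‖v.eval y - y ^ m‖ ≤ ‖y‖ ^ m / 2 := by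
    have he : v.eval y = ∑ i ∈ Finset.range (m + 1), v.coeff i * y ^ i :=
      Polynomial.eval_eq_sum_range y
    rw [he, Finset.sum_range_succ, hm.coeff_natDegree, one_mul, add_sub_cancel_right]
    calc ‖∑ i ∈ Finset.range m, v.coeff i * y ^ i‖
        ≤ ∑ i ∈ Finset.range m, ‖v.coeff i * y ^ i‖ := norm_sum_le _ _
      _ ≤ ‖y‖ ^ m / 2 := by
          rcases Nat.eq_zero_or_pos m with h0 | h0
          · simp only [h0, Finset.range_zero, Finset.sum_empty, pow_zero]
            positivity
          · have hstep : ∀ i ∈ Finset.range m, ‖v.coeff i * y ^ i‖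
                ≤ ‖v.coeff i‖ * ‖y‖ ^ (m - 1) := by
              intro i hi
              rw [norm_mul, norm_pow]
              exact mul_le_mul_of_nonneg_left
                (pow_le_pow_right₀ h1 (Nat.le_sub_one_of_lt (Finset.mem_range.mp hi)))
                (norm_nonneg _)
            calc ∑ i ∈ Finset.range m, ‖v.coeff i * y ^ i‖
                ≤ ∑ i ∈ Finset.range m, ‖v.coeff i‖ * ‖y‖ ^ (m - 1) :=
                  Finset.sum_le_sum hstep
              _ = (∑ i ∈ Finset.range m, ‖v.coeff i‖) * ‖y‖ ^ (m - 1) := by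
                  rw [Finset.sum_mul]
              _ ≤ (‖y‖ / 2) * ‖y‖ ^ (m - 1) := by
                  apply mul_le_mul_of_nonneg_right (by linarith) (by positivity)
              _ = ‖y‖ ^ m / 2 := by
                  rw [div_mul_eq_mul_div, ← pow_succ', Nat.sub_add_cancel h0]
  have hnorm : ‖y ^ m‖ = ‖y‖ ^ m := norm_pow _ _
  constructor
  · have h3 := norm_sub_norm_le (y ^ m) (y ^ m - v.eval y)
    rw [sub_sub_cancel] at h3
    rw [← norm_sub_rev] at h3
    rw [hnorm] at h3
    linarith
  · have h4 : ‖v.eval y‖ ≤ ‖y ^ m‖ + ‖v.eval y - y ^ m‖ := by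
      calc ‖v.eval y‖ = ‖y ^ m + (v.eval y - y ^ m)‖ := by ring_nf
        _ ≤ ‖y ^ m‖ + ‖v.eval y - y ^ m‖ := norm_add_le _ _
    rw [hnorm] at h4
    linarith

private lemma not_integrableOn_rpow_norm {s : ℝ} (hs : -2 ≤ s) {R : ℝ} (hR : 1 ≤ R) :
    ¬ IntegrableOn (fun x : ℂ => ‖x‖ ^ s) {x : ℂ | R ≤ ‖x‖} volume := by
  intro hint
  have hR0 : (0:ℝ) < R := lt_of_lt_of_le one_pos hR
  have hSm : MeasurableSet {x : ℂ | R ≤ ‖x‖} :=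
    measurableSet_le measurable_const measurable_norm
  have hfin : ∫⁻ x in {x : ℂ | R ≤ ‖x‖}, ENNReal.ofReal (‖x‖ ^ s) < ⊤ := by
    have h2 := hint.2
    rw [hasFiniteIntegral_iff_ofReal
      (Filter.Eventually.of_forall fun x => Real.rpow_nonneg (norm_nonneg _) _)] at h2
    exact h2
  rcases le_or_gt 0 s with hs0 | hs0
  · -- s ≥ 0 : the set has infinite measure and f ≥ 1 there
    have hset : (Metric.ball (0:ℂ) R)ᶜ = {x : ℂ | R ≤ ‖x‖} := by
      ext x; simp [Metric.mem_ball, Complex.dist_eq, not_lt]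
    have htop : volume ({x : ℂ | R ≤ ‖x‖}) = ⊤ := by
      rw [← hset]
      by_contra hne
      have h1 : volume (Set.univ : Set ℂ) = ⊤ :=
        MeasureTheory.measure_univ_of_isAddLeftInvariant volume
      have h2 := measure_union_le (μ := volume) (Metric.ball (0:ℂ) R) (Metric.ball (0:ℂ) R)ᶜ
      rw [Set.union_compl_self] at h2
      have : volume (Metric.ball (0:ℂ) R) + volume (Metric.ball (0:ℂ) R)ᶜ < ⊤ :=
        ENNReal.add_lt_top.mpr ⟨measure_ball_lt_top, lt_top_iff_ne_top.2 hne⟩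
      rw [h1] at h2
      exact absurd (lt_of_le_of_lt h2 this) (lt_irrefl _)
    have hlow : (1:ℝ≥0∞) * volume {x : ℂ | R ≤ ‖x‖}
        ≤ ∫⁻ x in {x : ℂ | R ≤ ‖x‖}, ENNReal.ofReal (‖x‖ ^ s) := by
      rw [← setLIntegral_const]
      apply setLIntegral_mono ((measurable_norm.pow_const s).ennreal_ofReal)
      intro x hx
      rw [show (1:ℝ≥0∞) = ENNReal.ofReal 1 by simp]
      apply ENNReal.ofReal_le_ofReal
      exact Real.one_le_rpow (le_trans hR hx) hs0
    rw [htop] at hlow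
    simp only [one_mul, top_le_iff] at hlow
    rw [hlow] at hfin
    exact absurd hfin (lt_irrefl _)
  · -- -2 ≤ s < 0 : annuli
    set A : ℕ → Set ℂ := fun n =>
      Metric.ball 0 (2 ^ (n + 1) * R) \ Metric.ball 0 (2 ^ n * R) with hA
    have hrpos : ∀ n : ℕ, (0:ℝ) < 2 ^ n * R := fun n => by positivity
    have hr1 : ∀ n : ℕ, (1:ℝ) ≤ 2 ^ n * R := fun n => by
      calc (1:ℝ) = 1 * 1 := by ring
        _ ≤ 2 ^ n * R := by
            apply mul_le_mul (one_le_pow₀ one_le_two) hR one_pos.le (by positivity)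
    have hmeas : ∀ n, MeasurableSet (A n) := fun n =>
      measurableSet_ball.diff measurableSet_ball
    have hmono : ∀ {a b : ℕ}, a ≤ b → (2:ℝ) ^ a * R ≤ 2 ^ b * R := fun {a b} hab =>
      mul_le_mul_of_nonneg_right (pow_le_pow_right₀ one_le_two hab) hR0.le
    have hdisj : Pairwise (Function.onFun Disjoint A) := by
      have key : ∀ n k, n < k → Disjoint (A n) (A k) := by
        intro n k hnk
        rw [Set.disjoint_left]
        rintro x ⟨hx1, -⟩ ⟨-, hx4⟩
        exact hx4 (Metric.ball_subset_ball (hmono hnk) hx1)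
      intro n k hnk
      rcases hnk.lt_or_gt with hlt | hlt
      · exact key _ _ hlt
      · exact (key _ _ hlt).symm
    have hsub : ∀ n, A n ⊆ {x : ℂ | R ≤ ‖x‖} := by
      intro n x hx
      have := hx.2
      simp only [Metric.mem_ball, Complex.dist_eq, sub_zero, not_lt] at this
      have h' : (2:ℝ) ^ n * R ≤ ‖x‖ := by simpa using this
      exact le_trans (le_trans (le_mul_of_one_le_left hR0.le (one_le_pow₀ one_le_two)) h') le_rfl
    have hball : ∀ r : ℝ, 0 ≤ r → volume (Metric.ball (0:ℂ) r)
        = ENNReal.ofReal (r ^ 2 * Real.pi) := by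
      intro r hr
      rw [Complex.volume_ball, ← ENNReal.ofReal_pow hr,
        ← Real.coe_toNNReal Real.pi Real.pi_pos.le]
      rw [ENNReal.ofReal_mul (by positivity)]
      congr 1
      · rw [ENNReal.ofReal_coe_nnreal]
        congr 1
        exact NNReal.coe_injective (by simp [Real.coe_toNNReal _ Real.pi_pos.le,
          NNReal.coe_real_pi])
    have hterm : ∀ n : ℕ, (1:ℝ≥0∞) ≤ ∫⁻ x in A n, ENNReal.ofReal (‖x‖ ^ s) := by
      intro n
      set r₀ : ℝ := 2 ^ n * R with hr₀
      have hr₀1 : (1:ℝ) ≤ r₀ := hr1 n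
      have hr₀0 : (0:ℝ) < r₀ := hrpos n
      have hrr : (2:ℝ) ^ (n + 1) * R = 2 * r₀ := by rw [hr₀]; ring
      -- measure of the annulus
      have hAn : volume (A n) = ENNReal.ofReal (3 * Real.pi * r₀ ^ 2) := by
        rw [hA]
        rw [measure_diff (Metric.ball_subset_ball (hmono (Nat.le_succ n)))
          measurableSet_ball.nullMeasurableSet (measure_ball_lt_top).ne]
        rw [hball _ (by positivity), hball _ hr₀0.le,
          ← ENNReal.ofReal_sub _ (by positivity)]
        congr 1
        rw [hrr]; ring
      -- pointwise lower bound
      have hlb : ∀ x ∈ A n, ENNReal.ofReal ((2 * r₀) ^ s) ≤ ENNReal.ofReal (‖x‖ ^ s) := by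
        intro x hx
        apply ENNReal.ofReal_le_ofReal
        have hx1 : ‖x‖ < 2 * r₀ := by
          have := hx.1
          simp only [Metric.mem_ball, Complex.dist_eq, sub_zero] at this
          calc ‖x‖ = ‖x‖ := rfl
            _ < 2 ^ (n + 1) * R := this
            _ = 2 * r₀ := hrr
        have hx0 : (0:ℝ) < ‖x‖ := by
          have := hx.2
          simp only [Metric.mem_ball, Complex.dist_eq, sub_zero, not_lt] at this
          exact lt_of_lt_of_le hr₀0 this
        exact Real.rpow_le_rpow_of_nonpos hx0 hx1.le hs0.le
      calc (1:ℝ≥0∞) = ENNReal.ofReal 1 := by simp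
        _ ≤ ENNReal.ofReal ((2 * r₀) ^ s) * ENNReal.ofReal (3 * Real.pi * r₀ ^ 2) := by
            rw [← ENNReal.ofReal_mul (Real.rpow_nonneg (by positivity) _)]
            apply ENNReal.ofReal_le_ofReal
            have h1 : (2 * r₀) ^ (-2:ℝ) ≤ (2 * r₀) ^ s :=
              Real.rpow_le_rpow_of_exponent_le (by linarith) hs
            have h2 : (2 * r₀) ^ (-2:ℝ) = ((2 * r₀) ^ 2)⁻¹ := by
              rw [show (-2:ℝ) = -((2:ℕ):ℝ) by norm_num, Real.rpow_neg (by positivity),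
                Real.rpow_natCast]
            have h3 : ((2 * r₀) ^ 2)⁻¹ * (3 * Real.pi * r₀ ^ 2) = 3 * Real.pi / 4 := by
              field_simp; ring
            have hpi := Real.pi_gt_three
            have h4 : (1:ℝ) ≤ ((2 * r₀) ^ 2)⁻¹ * (3 * Real.pi * r₀ ^ 2) := by
              rw [h3]; linarith
            calc (1:ℝ) ≤ ((2 * r₀) ^ 2)⁻¹ * (3 * Real.pi * r₀ ^ 2) := h4
              _ = (2 * r₀) ^ (-2:ℝ) * (3 * Real.pi * r₀ ^ 2) := by rw [h2]
              _ ≤ (2 * r₀) ^ s * (3 * Real.pi * r₀ ^ 2) := by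
                  apply mul_le_mul_of_nonneg_right h1 (by positivity)
        _ = ENNReal.ofReal ((2 * r₀) ^ s) * volume (A n) := by rw [hAn]
        _ = ∫⁻ _ in A n, ENNReal.ofReal ((2 * r₀) ^ s) := (setLIntegral_const _ _).symm
        _ ≤ ∫⁻ x in A n, ENNReal.ofReal (‖x‖ ^ s) := setLIntegral_mono' (hmeas n) hlb
    have : (⊤:ℝ≥0∞) ≤ ∫⁻ x in {x : ℂ | R ≤ ‖x‖}, ENNReal.ofReal (‖x‖ ^ s) := by
      calc (⊤:ℝ≥0∞) = ∑' _ : ℕ, (1:ℝ≥0∞) :=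
            (ENNReal.tsum_const_eq_top_of_ne_zero one_ne_zero).symm
        _ ≤ ∑' n : ℕ, ∫⁻ x in A n, ENNReal.ofReal (‖x‖ ^ s) :=
            ENNReal.tsum_le_tsum hterm
        _ = ∫⁻ x in ⋃ n, A n, ENNReal.ofReal (‖x‖ ^ s) :=
            (lintegral_iUnion hmeas hdisj _).symm
        _ ≤ _ := lintegral_mono_set (Set.iUnion_subset hsub)
    rw [top_le_iff] at this
    rw [this] at hfin
    exact absurd hfin (lt_irrefl _)

/-- Growth of (generalized) Aharonov–Casher zero modes: if
`h(x) = -α log|x| + O(|x|⁻¹)` and `v` is a monic polynomial of degree `m`, then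
`u(x) = e^{h(x)} v(x₁ - ix₂)` satisfies `|u(x)| ≍ |x|^{m-α}` at infinity;
consequently `u ∈ L²(ℝ²)` iff `m < α - 1`, and `u` is bounded iff `m ≤ α`. -/
theorem aharonov_casher_mode_growth
    (α : ℝ) (hα : 0 < α) (h : ℂ → ℝ) (hcont : Continuous h)
    (hasymp : ∃ C R : ℝ, 0 < R ∧ ∀ x : ℂ, R ≤ ‖x‖ →
      |h x + α * Real.log ‖x‖| ≤ C / ‖x‖)
    (v : Polynomial ℂ) (hmonic : v.Monic) (m : ℕ) (hdeg : v.natDegree = m)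
    (u : ℂ → ℂ)
    (hu : ∀ x : ℂ, u x = Complex.exp (h x) * Polynomial.eval ((starRingEnd ℂ) x) v) :
    (∃ c₁ c₂ R' : ℝ, 0 < c₁ ∧ 0 < R' ∧ ∀ x : ℂ, R' ≤ ‖x‖ →
        c₁ * ‖x‖ ^ ((m : ℝ) - α) ≤ ‖u x‖ ∧ ‖u x‖ ≤ c₂ * ‖x‖ ^ ((m : ℝ) - α)) ∧
    (MemLp u 2 volume ↔ (m : ℝ) < α - 1) ∧
    ((∃ M : ℝ, ∀ x : ℂ, ‖u x‖ ≤ M) ↔ (m : ℝ) ≤ α) := by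
  obtain ⟨C, R, hRpos, hC⟩ := hasymp
  obtain ⟨B, hB0, hpb⟩ := poly_two_sided v hmonic
  set C₀ : ℝ := |C| / R with hC₀
  have hC₀0 : 0 ≤ C₀ := by positivity
  set R' : ℝ := max R (max 1 (2 * B)) with hR'
  have hR'R : R ≤ R' := le_max_left _ _
  have hR'1 : (1:ℝ) ≤ R' := le_trans (le_max_left _ _) (le_max_right _ _)
  have hR'B : 2 * B ≤ R' := le_trans (le_max_right _ _) (le_max_right _ _)
  have hR'0 : (0:ℝ) < R' := lt_of_lt_of_le one_pos hR'1
  set c₁ : ℝ := Real.exp (-C₀) / 2 with hc₁def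
  set c₂ : ℝ := 3 / 2 * Real.exp C₀ with hc₂def
  have hc₁0 : (0:ℝ) < c₁ := by rw [hc₁def]; positivity
  have hc₂0 : (0:ℝ) < c₂ := by rw [hc₂def]; positivity
  set t : ℝ := (m:ℝ) - α with ht
  have key : ∀ x : ℂ, R' ≤ ‖x‖ → c₁ * ‖x‖ ^ t ≤ ‖u x‖ ∧ ‖u x‖ ≤ c₂ * ‖x‖ ^ t := by
    intro x hx
    have hx1 : (1:ℝ) ≤ ‖x‖ := le_trans hR'1 hx
    have hx0 : (0:ℝ) < ‖x‖ := lt_of_lt_of_le one_pos hx1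
    have hxR : R ≤ ‖x‖ := le_trans hR'R hx
    have hb := hC x hxR
    have habs : |h x + α * Real.log ‖x‖| ≤ C₀ := by
      refine le_trans hb ?_
      rw [hC₀]
      exact div_le_div₀ (abs_nonneg C) (le_abs_self C) hRpos hxR
    have hrw : Real.exp (-(α * Real.log ‖x‖)) = ‖x‖ ^ (-α) := by
      rw [Real.rpow_def_of_pos hx0]
      congr 1
      ring
    have hE1 : Real.exp (-C₀) * ‖x‖ ^ (-α) ≤ Real.exp (h x) := by
      rw [← hrw, ← Real.exp_add]
      apply Real.exp_le_exp.mpr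
      have := (abs_le.mp habs).1
      linarith
    have hE2 : Real.exp (h x) ≤ Real.exp C₀ * ‖x‖ ^ (-α) := by
      rw [← hrw, ← Real.exp_add]
      apply Real.exp_le_exp.mpr
      have := (abs_le.mp habs).2
      linarith
    have hyc : ‖(starRingEnd ℂ) x‖ = ‖x‖ := RCLike.norm_conj x
    obtain ⟨hP1, hP2⟩ := hpb ((starRingEnd ℂ) x) (by rw [hyc]; exact hx1)
        (by rw [hyc]; exact le_trans hR'B hx)
    rw [hyc, hdeg] at hP1 hP2
    have hn : ‖u x‖ = Real.exp (h x) * ‖v.eval ((starRingEnd ℂ) x)‖ := by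
      rw [hu x, norm_mul]
      congr 1
      rw [Complex.norm_exp]
      simp
    have hpowrw : ‖x‖ ^ m * ‖x‖ ^ (-α) = ‖x‖ ^ t := by
      rw [← Real.rpow_natCast ‖x‖ m, ← Real.rpow_add hx0, ht]
      congr 1
    constructor
    · have hmul := mul_le_mul hE1 hP1 (by positivity) (Real.exp_nonneg _)
      rw [hn]
      refine le_trans (le_of_eq ?_) hmul
      rw [hc₁def, ← hpowrw]
      ring
    · have hmul := mul_le_mul hE2 hP2 (norm_nonneg _) (by positivity)
      rw [hn]
      refine le_trans hmul (le_of_eq ?_)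
      rw [hc₂def, ← hpowrw]
      ring
  have hucont : Continuous u := by
    have hequ : u = fun x => Complex.exp (h x) * v.eval ((starRingEnd ℂ) x) := funext hu
    rw [hequ]
    exact (Complex.continuous_exp.comp (Complex.continuous_ofReal.comp hcont)).mul
      ((v.continuous).comp (RCLike.continuous_conj (K := ℂ)))
  have hS : MeasurableSet {x : ℂ | R' ≤ ‖x‖} :=
    measurableSet_le measurable_const measurable_norm
  refine ⟨⟨c₁, c₂, R', hc₁0, hR'0, fun x hx => key x hx⟩, ?_, ?_⟩
  · -- L² characterization
    constructor
    · intro hL2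
      by_contra hcon
      push_neg at hcon
      have hs2 : -2 ≤ 2 * t := by rw [ht]; linarith
      have hint : Integrable (fun x => ‖u x‖ ^ 2) volume :=
        (memLp_two_iff_integrable_sq_norm hucont.aestronglyMeasurable).mp hL2
      have hint2 : IntegrableOn (fun x : ℂ => c₁ ^ 2 * ‖x‖ ^ (2 * t))
          {x : ℂ | R' ≤ ‖x‖} volume := by
        apply Integrable.mono' (hint.integrableOn)
          (((measurable_norm.pow_const (2 * t)).const_mul _).aestronglyMeasurable)
        rw [ae_restrict_iff' hS]
        apply Filter.Eventually.of_forall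
        intro x hx
        have hx0 : (0:ℝ) < ‖x‖ := lt_of_lt_of_le hR'0 hx
        have h1 := (key x hx).1
        have h2 : (‖x‖ ^ t) ^ 2 = ‖x‖ ^ (2 * t) := by
          rw [pow_two, ← Real.rpow_add hx0]
          congr 1
          ring
        calc ‖c₁ ^ 2 * ‖x‖ ^ (2 * t)‖ = c₁ ^ 2 * ‖x‖ ^ (2 * t) := by
              rw [Real.norm_eq_abs, abs_of_nonneg (by positivity)]
          _ = (c₁ * ‖x‖ ^ t) ^ 2 := by rw [mul_pow, h2]
          _ ≤ ‖u x‖ ^ 2 := pow_le_pow_left₀ (by positivity) h1 2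
      have hint3 : IntegrableOn (fun x : ℂ => ‖x‖ ^ (2 * t)) {x : ℂ | R' ≤ ‖x‖} volume := by
        have h4 := hint2.const_mul (c₁ ^ 2)⁻¹
        have heq : (fun x : ℂ => (c₁ ^ 2)⁻¹ * (c₁ ^ 2 * ‖x‖ ^ (2 * t)))
            = fun x : ℂ => ‖x‖ ^ (2 * t) := by
          funext x
          field_simp
        rwa [heq] at h4
      exact not_integrableOn_rpow_norm hs2 hR'1 hint3
    · intro hlt
      have hs2 : 2 * t < -2 := by rw [ht]; linarith
      rw [memLp_two_iff_integrable_sq_norm hucont.aestronglyMeasurable]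
      have hin : IntegrableOn (fun x : ℂ => ‖u x‖ ^ 2) (Metric.closedBall 0 R') volume :=
        ((hucont.norm.pow 2).continuousOn).integrableOn_compact (isCompact_closedBall _ _)
      have hout : IntegrableOn (fun x : ℂ => ‖u x‖ ^ 2) {x : ℂ | R' ≤ ‖x‖} volume := by
        have hfr : (Module.finrank ℝ ℂ : ℝ) < -(2 * t) := by
          rw [Complex.finrank_real_complex]
          push_cast
          linarith
        have hintg : Integrable
            (fun x : ℂ => (c₂ ^ 2 * 2 ^ (-(2 * t))) * (1 + ‖x‖) ^ (2 * t)) volume := by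
          have h5 := (integrable_one_add_norm (E := ℂ) (μ := volume) hfr).const_mul
            (c₂ ^ 2 * 2 ^ (-(2 * t)))
          simpa [neg_neg] using h5
        apply Integrable.mono' hintg.integrableOn (hucont.norm.pow 2).aestronglyMeasurable
        rw [ae_restrict_iff' hS]
        apply Filter.Eventually.of_forall
        intro x hx
        have hx1 : (1:ℝ) ≤ ‖x‖ := le_trans hR'1 hx
        have hx0 : (0:ℝ) < ‖x‖ := lt_of_lt_of_le one_pos hx1
        have h1 := (key x hx).2
        have h2 : (‖x‖ ^ t) ^ 2 = ‖x‖ ^ (2 * t) := by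
          rw [pow_two, ← Real.rpow_add hx0]
          congr 1
          ring
        have hhalf : (1 + ‖x‖) / 2 ≤ ‖x‖ := by linarith
        have h3 : ‖x‖ ^ (2 * t) ≤ ((1 + ‖x‖) / 2) ^ (2 * t) :=
          Real.rpow_le_rpow_of_nonpos (by linarith) hhalf (by linarith)
        have h4 : ((1 + ‖x‖) / 2) ^ (2 * t) = 2 ^ (-(2 * t)) * (1 + ‖x‖) ^ (2 * t) := by
          rw [Real.div_rpow (by linarith) (by norm_num), Real.rpow_neg (by norm_num)]
          rw [div_eq_inv_mul]
        calc ‖‖u x‖ ^ 2‖ = ‖u x‖ ^ 2 := by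
              rw [Real.norm_eq_abs, abs_of_nonneg (by positivity)]
          _ ≤ (c₂ * ‖x‖ ^ t) ^ 2 := pow_le_pow_left₀ (norm_nonneg _) h1 2
          _ = c₂ ^ 2 * ‖x‖ ^ (2 * t) := by rw [mul_pow, h2]
          _ ≤ c₂ ^ 2 * (((1 + ‖x‖) / 2) ^ (2 * t)) :=
              mul_le_mul_of_nonneg_left h3 (by positivity)
          _ = (c₂ ^ 2 * 2 ^ (-(2 * t))) * (1 + ‖x‖) ^ (2 * t) := by
              rw [h4]
              ring
      have huniv : IntegrableOn (fun x : ℂ => ‖u x‖ ^ 2) Set.univ volume := by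
        have hcover : (Set.univ : Set ℂ) ⊆ Metric.closedBall 0 R' ∪ {x : ℂ | R' ≤ ‖x‖} := by
          intro x _
          rcases le_total ‖x‖ R' with hc | hc
          · exact Or.inl (mem_closedBall_zero_iff.mpr hc)
          · exact Or.inr hc
        exact (hin.union hout).mono_set hcover
      rwa [integrableOn_univ] at huniv
  · -- boundedness characterization
    constructor
    · rintro ⟨M, hM⟩
      by_contra hcon
      push_neg at hcon
      have ht0 : (0:ℝ) < t := by rw [ht]; linarith
      have hM0 : (0:ℝ) ≤ M := le_trans (norm_nonneg _) (hM 0)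
      set a : ℝ := M / c₁ + 1 with ha
      have ha1 : (0:ℝ) < a := by rw [ha]; positivity
      set T : ℝ := max R' (a ^ (1 / t)) with hT
      have hTR : R' ≤ T := le_max_left _ _
      have hT0 : (0:ℝ) < T := lt_of_lt_of_le hR'0 hTR
      have hxT : ‖(T:ℂ)‖ = T := by
        rw [Complex.norm_real]
        exact abs_of_pos hT0
      have hkey := (key (T:ℂ) (by rw [hxT]; exact hTR)).1
      have hMb := hM (T:ℂ)
      rw [hxT] at hkey
      have h5 : a ≤ T ^ t := by
        calc a = (a ^ (1 / t)) ^ t := by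
              rw [← Real.rpow_mul ha1.le, one_div_mul_cancel ht0.ne', Real.rpow_one]
          _ ≤ T ^ t := Real.rpow_le_rpow (Real.rpow_nonneg ha1.le _) (le_max_right _ _) ht0.le
      have h6 : c₁ * a ≤ M :=
        le_trans (mul_le_mul_of_nonneg_left h5 hc₁0.le) (le_trans hkey hMb)
      rw [ha] at h6
      have h7 : c₁ * (M / c₁ + 1) = M + c₁ := by
        field_simp
      rw [h7] at h6
      linarith
    · intro hle
      have ht0 : t ≤ 0 := by rw [ht]; linarith
      obtain ⟨M₀, hM₀⟩ := (isCompact_closedBall (0:ℂ) R').exists_bound_of_continuousOn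
        hucont.continuousOn
      refine ⟨max M₀ (c₂ * R' ^ t), fun x => ?_⟩
      rcases le_total ‖x‖ R' with hc | hc
      · exact le_trans (hM₀ x (mem_closedBall_zero_iff.mpr hc)) (le_max_left _ _)
      · refine le_trans (key x hc).2 (le_trans ?_ (le_max_right _ _))
        exact mul_le_mul_of_nonneg_left
          (Real.rpow_le_rpow_of_nonpos hR'0 hc ht0) hc₂0.le
end

section
/- Let H be a Hilbert space and let ψ₀,…,ψ_{n-1} be pairwise orthogonal nonzero vectors. Let P = Σₖ ‖ψₖ‖⁻² ψₖ ⟨ψₖ, ·⟩ be the orthogonal projection onto their span, and let v be a bounded non-negative self-adjoint operator such that the vectors {v^{1/2} ψₖ} are also pairwise orthogonal and nonzero. Then the nonzero eigenvalues of v^{1/2} P v^{1/2} are exactly μₖ = ‖v^{1/2} ψₖ‖² / ‖ψₖ‖², k = 0,…,n-1. -/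
open scoped InnerProductSpace

/-- Nonzero eigenvalues of `v^{1/2} P v^{1/2}` for pairwise orthogonal states
(radial case): with `P = Σₖ ‖ψₖ‖⁻² ψₖ⟨ψₖ,·⟩` the orthogonal projection onto
`span{ψₖ}` and `w = v^{1/2}` such that the `w ψₖ` are pairwise orthogonal and
nonzero, the nonzero eigenvalues of `w P w` are exactly
`μₖ = ‖w ψₖ‖²/‖ψₖ‖²`. -/
theorem radial_eigenvalues_of_vPv
    {H : Type*} [NormedAddCommGroup H] [InnerProductSpace ℂ H] [CompleteSpace H]
    {n : ℕ} (ψ : Fin n → H) (hne : ∀ k, ψ k ≠ 0)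
    (horth : ∀ j k, j ≠ k → ⟪ψ j, ψ k⟫_ℂ = 0)
    (P : H →L[ℂ] H)
    (hP : ∀ x : H, P x = ∑ k, ((‖ψ k‖ ^ 2 : ℝ) : ℂ)⁻¹ • (⟪ψ k, x⟫_ℂ • ψ k))
    (v w : H →L[ℂ] H)
    (hv : IsSelfAdjoint v) (hvpos : ∀ x : H, 0 ≤ (⟪x, v x⟫_ℂ).re)
    (hw : IsSelfAdjoint w) (hwv : w ∘L w = v)
    (hwne : ∀ k, w (ψ k) ≠ 0)
    (hworth : ∀ j k, j ≠ k → ⟪w (ψ j), w (ψ k)⟫_ℂ = 0) :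
    ∀ μ : ℂ, μ ≠ 0 →
      ((∃ x : H, x ≠ 0 ∧ w (P (w x)) = μ • x) ↔
        ∃ k, μ = ((‖w (ψ k)‖ ^ 2 / ‖ψ k‖ ^ 2 : ℝ) : ℂ)) := by
  intro μ hμ
  have hsym' : ∀ a b : H, ⟪w a, b⟫_ℂ = ⟪a, w b⟫_ℂ := fun a b => hw.isSymmetric a b
  have hψ2 : ∀ k : Fin n, ((‖ψ k‖ ^ 2 : ℝ) : ℂ) ≠ 0 := by
    intro k
    exact_mod_cast pow_ne_zero 2 (norm_ne_zero_iff.mpr (hne k))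
  have hwψ2 : ∀ k : Fin n, ((‖w (ψ k)‖ ^ 2 : ℝ) : ℂ) ≠ 0 := by
    intro k
    exact_mod_cast pow_ne_zero 2 (norm_ne_zero_iff.mpr (hwne k))
  have hexp : ∀ x : H, w (P (w x)) =
      ∑ k, ((((‖ψ k‖ ^ 2 : ℝ) : ℂ)⁻¹ * ⟪ψ k, w x⟫_ℂ) • w (ψ k)) := by
    intro x
    rw [hP (w x), map_sum]
    refine Finset.sum_congr rfl fun k _ => ?_
    rw [map_smul, map_smul, smul_smul]
  constructor
  · rintro ⟨x, hx, hEq⟩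
    have hsum : ∑ k, ((((‖ψ k‖ ^ 2 : ℝ) : ℂ)⁻¹ * ⟪ψ k, w x⟫_ℂ) • w (ψ k)) = μ • x := by
      rw [← hexp, hEq]
    have hnz : ∃ j, ⟪ψ j, w x⟫_ℂ ≠ 0 := by
      by_contra h
      push_neg at h
      apply hx
      have h0 : μ • x = 0 := by
        rw [← hsum]
        exact Finset.sum_eq_zero fun k _ => by rw [h k, mul_zero, zero_smul]
      rcases smul_eq_zero.mp h0 with h1 | h1
      · exact absurd h1 hμ
      · exact h1
    obtain ⟨j, hj⟩ := hnz
    refine ⟨j, ?_⟩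
    have hinner : ⟪w (ψ j), ∑ k, ((((‖ψ k‖ ^ 2 : ℝ) : ℂ)⁻¹ * ⟪ψ k, w x⟫_ℂ) • w (ψ k))⟫_ℂ
        = ((‖ψ j‖ ^ 2 : ℝ) : ℂ)⁻¹ * ⟪ψ j, w x⟫_ℂ * ((‖w (ψ j)‖ ^ 2 : ℝ) : ℂ) := by
      rw [inner_sum, Finset.sum_eq_single j]
      · rw [inner_smul_right, inner_self_eq_norm_sq_to_K]
        norm_cast
      · intro k _ hk
        rw [inner_smul_right, hworth j k (Ne.symm hk), mul_zero]
      · intro h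
        exact absurd (Finset.mem_univ j) h
    have hinner2 : ⟪w (ψ j), μ • x⟫_ℂ = μ * ⟪ψ j, w x⟫_ℂ := by
      rw [inner_smul_right, hsym' (ψ j) x]
    have heq2 : ((‖ψ j‖ ^ 2 : ℝ) : ℂ)⁻¹ * ⟪ψ j, w x⟫_ℂ * ((‖w (ψ j)‖ ^ 2 : ℝ) : ℂ)
        = μ * ⟪ψ j, w x⟫_ℂ := by
      rw [← hinner, ← hinner2, hsum]
    have h3 : (((‖ψ j‖ ^ 2 : ℝ) : ℂ)⁻¹ * ((‖w (ψ j)‖ ^ 2 : ℝ) : ℂ)) * ⟪ψ j, w x⟫_ℂ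
        = μ * ⟪ψ j, w x⟫_ℂ := by linear_combination heq2
    have h4 : μ = ((‖ψ j‖ ^ 2 : ℝ) : ℂ)⁻¹ * ((‖w (ψ j)‖ ^ 2 : ℝ) : ℂ) :=
      (mul_right_cancel₀ hj h3).symm
    rw [h4, Complex.ofReal_div]
    rw [div_eq_inv_mul]
  · rintro ⟨k, rfl⟩
    refine ⟨w (ψ k), hwne k, ?_⟩
    rw [hexp, Finset.sum_eq_single k]
    · have h1 : ⟪ψ k, w (w (ψ k))⟫_ℂ = ((‖w (ψ k)‖ ^ 2 : ℝ) : ℂ) := by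
        rw [← hsym' (ψ k) (w (ψ k)), inner_self_eq_norm_sq_to_K]
        norm_cast
      rw [h1]
      congr 1
      push_cast
      field_simp
    · intro j _ hjk
      have h2 : ⟪ψ j, w (w (ψ k))⟫_ℂ = 0 := by
        rw [← hsym' (ψ j) (w (ψ k))]
        exact hworth j k hjk
      rw [h2, mul_zero, zero_smul]
    · intro h
      exact absurd (Finset.mem_univ k) h
end

section
/- Let H be a Hilbert space, G a one-dimensional subspace spanned by a unit vector φ̃, and K a bounded self-adjoint operator on H with ⟨φ̃, Kφ̃⟩ =: κ > 0. Suppose z : (0, ε₀) × (Λ, 0) → ℝ is continuous in λ and satisfies |z(ε,λ) - (1 + ε log|λ| · κ)| ≤ C ε whenever C₁ ≤ -ε log|λ| ≤ C₂, where κ⁻¹ ∈ (C₁ + δ, C₂ - δ). Then for small ε there exists λ(ε) in the window with z(ε, λ(ε)) = 0, and λ(ε) = -exp(-κ⁻¹ ε⁻¹ (1 + O(ε))) as ε → 0⁺. -/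
open Set
open scoped InnerProductSpace

/-- Step 7 of the integer-flux proof: `z(ε,λ)`, the scalar Schur complement on
the one-dimensional space `G = span{φ̃}`, approximates `1 + ε log|λ|·κ` with
`κ = ⟨φ̃, Kφ̃⟩ > 0` in the window `C₁ ≤ -ε log|λ| ≤ C₂`,
`κ⁻¹ ∈ (C₁+δ, C₂-δ)`. Then for small `ε` a zero `λ(ε)` exists in the window,
and every such zero satisfies `λ(ε) = -exp(-κ⁻¹ε⁻¹(1 + O(ε)))`. -/
theorem exponential_window_zero
    {H : Type*} [NormedAddCommGroup H] [InnerProductSpace ℂ H] [CompleteSpace H]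
    (G : Submodule ℂ H) (φ : H) (hφ : ‖φ‖ = 1) (hG : G = Submodule.span ℂ {φ})
    (K : H →L[ℂ] H) (hK : IsSelfAdjoint K)
    (κ : ℝ) (hκ : κ = (⟪φ, K φ⟫_ℂ).re) (hκpos : 0 < κ)
    (z : ℝ → ℝ → ℝ) (ε₀ Λ C C₁ C₂ δ : ℝ)
    (hε₀ : 0 < ε₀) (hΛ : Λ < 0) (hC : 0 < C) (hδ : 0 < δ) (hC₁ : 0 < C₁)
    (hwin₁ : C₁ + δ < κ⁻¹) (hwin₂ : κ⁻¹ < C₂ - δ)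
    (hcont : ∀ ε ∈ Ioo (0 : ℝ) ε₀, ContinuousOn (z ε) (Ioo Λ 0))
    (happrox : ∀ ε ∈ Ioo (0 : ℝ) ε₀, ∀ l ∈ Ioo Λ (0 : ℝ),
      C₁ ≤ -(ε * Real.log (abs l)) → -(ε * Real.log (abs l)) ≤ C₂ →
      abs (z ε l - (1 + ε * Real.log (abs l) * κ)) ≤ C * ε) :
    ∃ ε₁ : ℝ, 0 < ε₁ ∧ ε₁ ≤ ε₀ ∧ ∃ C' : ℝ, 0 < C' ∧
      ∀ ε ∈ Ioo (0 : ℝ) ε₁,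
        (∃ l ∈ Ioo Λ (0 : ℝ), C₁ ≤ -(ε * Real.log (abs l)) ∧
          -(ε * Real.log (abs l)) ≤ C₂ ∧ z ε l = 0) ∧
        ∀ l ∈ Ioo Λ (0 : ℝ), C₁ ≤ -(ε * Real.log (abs l)) →
          -(ε * Real.log (abs l)) ≤ C₂ → z ε l = 0 →
          ∃ r : ℝ, |r| ≤ C' * ε ∧
            l = -Real.exp (-(κ⁻¹ * ε⁻¹ * (1 + r))) := by
  have hκinv : 0 < κ⁻¹ := inv_pos.mpr hκpos
  set M : ℝ := 1 + max 0 (-Real.log (-Λ)) with hMdef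
  have hM0 : 0 < M := by
    have : (0:ℝ) ≤ max 0 (-Real.log (-Λ)) := le_max_left _ _
    linarith
  have hlogΛ : -M < Real.log (-Λ) := by
    have : -Real.log (-Λ) ≤ max 0 (-Real.log (-Λ)) := le_max_right _ _
    simp only [hMdef]; linarith
  refine ⟨min ε₀ (min (δ*κ/C) (C₁/M)), lt_min hε₀ (lt_min (by positivity) (by positivity)),
    min_le_left _ _, C, hC, ?_⟩
  rintro ε ⟨hε, hεlt⟩
  have hεε₀ : ε < ε₀ := hεlt.trans_le (min_le_left _ _)
  have hεmem : ε ∈ Ioo (0:ℝ) ε₀ := ⟨hε, hεε₀⟩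
  have hεδ : C * ε < δ * κ := by
    have h := hεlt.trans_le ((min_le_right _ _).trans (min_le_left _ _))
    rw [lt_div_iff₀ hC] at h; linarith [mul_comm C ε]
  have hεM : ε * M < C₁ := by
    have h := hεlt.trans_le ((min_le_right _ _).trans (min_le_right _ _))
    rw [lt_div_iff₀ hM0] at h; linarith
  have hC₁κ : C₁ < κ⁻¹ - δ := by linarith
  have hκC₂ : κ⁻¹ + δ < C₂ := by linarith
  -- the endpoints
  set a : ℝ := -Real.exp (-((κ⁻¹-δ)/ε)) with hadef
  set b : ℝ := -Real.exp (-((κ⁻¹+δ)/ε)) with hbdef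
  have hab : a < b := by
    apply neg_lt_neg
    apply Real.exp_lt_exp.mpr
    rw [neg_lt_neg_iff]
    gcongr
    linarith
  have hb0 : b < 0 := by simp [hbdef, Real.exp_pos]
  have key : ∀ t : ℝ, C₁ ≤ t → Λ < -Real.exp (-(t/ε)) := by
    intro t ht
    have h1 : M < C₁ / ε := (lt_div_iff₀ hε).mpr (by linarith [mul_comm ε M])
    have h2 : C₁ / ε ≤ t / ε := by gcongr
    have h3 : -(t/ε) < Real.log (-Λ) := by linarith
    have h4 : Real.exp (-(t/ε)) < -Λ := by
      calc Real.exp (-(t/ε)) < Real.exp (Real.log (-Λ)) := Real.exp_lt_exp.mpr h3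
        _ = -Λ := Real.exp_log (neg_pos.mpr hΛ)
    linarith
  have haΛ : Λ < a := key _ hC₁κ.le
  have hsub : Icc a b ⊆ Ioo Λ 0 := fun l hl => ⟨lt_of_lt_of_le haΛ hl.1, lt_of_le_of_lt hl.2 hb0⟩
  -- log values at points of [a,b]
  have habslog : ∀ l : ℝ, l < 0 → Real.log (abs l) = Real.log (-l) := by
    intro l hl; rw [abs_of_neg hl]
  have hlog_window : ∀ l ∈ Icc a b,
      κ⁻¹ - δ ≤ -(ε * Real.log (abs l)) ∧ -(ε * Real.log (abs l)) ≤ κ⁻¹ + δ := by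
    intro l hl
    have hl0 : l < 0 := lt_of_le_of_lt hl.2 hb0
    have h1 : -l ≤ Real.exp (-((κ⁻¹-δ)/ε)) := by
      have := hl.1; simp only [hadef] at this; linarith
    have h2 : Real.exp (-((κ⁻¹+δ)/ε)) ≤ -l := by
      have := hl.2; simp only [hbdef] at this; linarith
    have hlog1 : Real.log (-l) ≤ -((κ⁻¹-δ)/ε) := by
      have := Real.log_le_log (by linarith [Real.exp_pos (-((κ⁻¹+δ)/ε))]) h1
      rwa [Real.log_exp] at this
    have hlog2 : -((κ⁻¹+δ)/ε) ≤ Real.log (-l) := by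
      have := Real.log_le_log (Real.exp_pos _) h2
      rwa [Real.log_exp] at this
    rw [habslog l hl0]
    constructor
    · have := mul_le_mul_of_nonneg_left hlog1 hε.le
      have he : ε * -((κ⁻¹-δ)/ε) = -(κ⁻¹-δ) := by field_simp
      nlinarith
    · have := mul_le_mul_of_nonneg_left hlog2 hε.le
      have he : ε * -((κ⁻¹+δ)/ε) = -(κ⁻¹+δ) := by field_simp
      nlinarith
  have hwinC : ∀ l ∈ Icc a b, C₁ ≤ -(ε * Real.log (abs l)) ∧ -(ε * Real.log (abs l)) ≤ C₂ := by
    intro l hl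
    obtain ⟨h1, h2⟩ := hlog_window l hl
    exact ⟨by linarith, by linarith⟩
  -- values at endpoints
  have hlog_a : Real.log (abs a) = -((κ⁻¹-δ)/ε) := by
    rw [habslog a (lt_of_lt_of_le hab hb0.le), hadef, neg_neg, Real.log_exp]
  have hlog_b : Real.log (abs b) = -((κ⁻¹+δ)/ε) := by
    rw [habslog b hb0, hbdef, neg_neg, Real.log_exp]
  have hεa : ε * Real.log (abs a) = -(κ⁻¹-δ) := by rw [hlog_a]; field_simp
  have hεb : ε * Real.log (abs b) = -(κ⁻¹+δ) := by rw [hlog_b]; field_simp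
  have hamem : a ∈ Icc a b := ⟨le_refl _, hab.le⟩
  have hbmem : b ∈ Icc a b := ⟨hab.le, le_refl _⟩
  have hκκ : κ⁻¹ * κ = 1 := inv_mul_cancel₀ hκpos.ne'
  have hza : 0 < z ε a := by
    have h := happrox ε hεmem a (hsub hamem) (hwinC a hamem).1 (hwinC a hamem).2
    rw [hεa] at h
    have h2 : (1 : ℝ) + -(κ⁻¹-δ) * κ = δ * κ := by
      rw [show -(κ⁻¹-δ) * κ = -(κ⁻¹*κ) + δ*κ by ring, hκκ]; ring
    rw [h2, abs_le] at h
    linarith [h.1, hεδ]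
  have hzb : z ε b < 0 := by
    have h := happrox ε hεmem b (hsub hbmem) (hwinC b hbmem).1 (hwinC b hbmem).2
    rw [hεb] at h
    have h2 : (1 : ℝ) + -(κ⁻¹+δ) * κ = -(δ * κ) := by
      rw [show -(κ⁻¹+δ) * κ = -(κ⁻¹*κ) - δ*κ by ring, hκκ]; ring
    rw [h2, abs_le] at h
    linarith [h.2, hεδ]
  constructor
  · -- existence via IVT
    have hivt := intermediate_value_Icc' hab.le (((hcont ε hεmem)).mono hsub)
    have h0 : (0:ℝ) ∈ Icc (z ε b) (z ε a) := ⟨hzb.le, hza.le⟩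
    obtain ⟨l, hl, hzl⟩ := hivt h0
    exact ⟨l, hsub hl, (hwinC l hl).1, (hwinC l hl).2, hzl⟩
  · -- asymptotics of any zero
    intro l hl hw1 hw2 hzl
    have h := happrox ε hεmem l hl hw1 hw2
    rw [hzl] at h
    have hr : |(-(1 + ε * Real.log (abs l) * κ))| ≤ C * ε := by
      rw [abs_neg]
      calc |1 + ε * Real.log (abs l) * κ| = |0 - (1 + ε * Real.log (abs l) * κ)| := by
            rw [zero_sub, abs_neg]
        _ ≤ C * ε := h
    refine ⟨-(1 + ε * Real.log (abs l) * κ), hr, ?_⟩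
    have hl0 : l < 0 := hl.2
    have harg : -(κ⁻¹ * ε⁻¹ * (1 + -(1 + ε * Real.log (abs l) * κ))) = Real.log (-l) := by
      rw [habslog l hl0] at *
      field_simp
      ring
    rw [harg, Real.exp_log (by linarith), neg_neg]
end
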